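/- Let H be a Hopf algebra over a commutative ring k with antipode S, and let σ: H → k be an algebra homomorphism (a character). Define Δ₂(h) = h₍₁₎ ⊗ σ(S(h₍₂₎)) h₍₃₎, ε₂ = σ, and S₂(h) = σ(h₍₁₎) S(h₍₂₎) σ(h₍₃₎). Then (H, m, 1, Δ₂, ε₂, S₂) is a Hopf algebra. -/

import Mathlib

open TensorProduct LinearMap

noncomputable section

variable {k H : Type*} [CommRing k] [Ring H] [HopfAlgebra k H]

/-- The map `H ⊗ H →ₗ H`, `a ⊗ b ↦ σ(a) • b`. -/
def sigmaSmul (σ : H →ₐ[k] k) : H ⊗[k] H →ₗ[k] H :=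
  TensorProduct.lift ((LinearMap.lsmul k H).comp σ.toLinearMap)

/-- The twisted coproduct `Δ₂(h) = h₍₁₎ ⊗ σ(S(h₍₂₎)) h₍₃₎`. -/
def twistedComul (σ : H →ₐ[k] k) : H →ₗ[k] H ⊗[k] H :=
  (LinearMap.lTensor H
      ((sigmaSmul σ) ∘ₗ LinearMap.rTensor H (HopfAlgebra.antipode (R := k)))) ∘ₗ
    (LinearMap.lTensor H (Coalgebra.comul (R := k))) ∘ₗ Coalgebra.comul (R := k)

/-- The twisted antipode `S₂(h) = σ(h₍₁₎) S(h₍₂₎) σ(h₍₃₎)`. -/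
def twistedAntipode (σ : H →ₐ[k] k) : H →ₗ[k] H :=
  (sigmaSmul σ) ∘ₗ
    (LinearMap.lTensor H
      ((sigmaSmul σ) ∘ₗ (TensorProduct.comm k H H).toLinearMap ∘ₗ
        LinearMap.rTensor H (HopfAlgebra.antipode (R := k)))) ∘ₗ
    (LinearMap.lTensor H (Coalgebra.comul (R := k))) ∘ₗ Coalgebra.comul (R := k)

namespace CMTwist

open Coalgebra HopfAlgebra

def conv (f g : H →ₗ[k] H) : H →ₗ[k] H :=
  LinearMap.mul' k H ∘ₗ TensorProduct.map f g ∘ₗ Coalgebra.comul (R := k)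

lemma mul_assoc' : LinearMap.mul' k H ∘ₗ rTensor H (LinearMap.mul' k H) =
    LinearMap.mul' k H ∘ₗ lTensor H (LinearMap.mul' k H) ∘ₗ
      (TensorProduct.assoc k H H H).toLinearMap := by
  apply TensorProduct.ext_threefold
  intro a b c
  simp [mul_assoc]

lemma conv_apply (f g : H →ₗ[k] H) (x : H) {ι : Type*} (r : Coalgebra.Repr k x ι) :
    conv f g x = ∑ i ∈ r.index, f (r.left i) * g (r.right i) := by
  simp only [conv, LinearMap.comp_apply, ← r.eq, map_sum, TensorProduct.map_tmul,
    LinearMap.mul'_apply]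

def e : H →ₗ[k] H := Algebra.linearMap k H ∘ₗ Coalgebra.counit (R := k)

lemma conv_e (f : H →ₗ[k] H) : conv f e = f := by
  ext x
  rw [conv_apply f e x (Coalgebra.Repr.arbitrary k x)]
  have key := Coalgebra.sum_map_tmul_counit_eq (R := k) f x
    (repr := Coalgebra.Repr.arbitrary k x)
  apply_fun (TensorProduct.rid k H) at key
  simp only [map_sum, TensorProduct.rid_tmul, one_smul] at key
  simp only [e, LinearMap.comp_apply, Algebra.linearMap_apply, LinearMap.id_apply]
  refine Eq.trans (Finset.sum_congr rfl fun i _ => ?_) key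
  rw [← Algebra.commutes, ← Algebra.smul_def]

lemma e_conv (f : H →ₗ[k] H) : conv e f = f := by
  ext x
  rw [conv_apply e f x (Coalgebra.Repr.arbitrary k x)]
  have key := Coalgebra.sum_counit_tmul_map_eq (R := k) f x
    (repr := Coalgebra.Repr.arbitrary k x)
  apply_fun (TensorProduct.lid k H) at key
  simp only [map_sum, TensorProduct.lid_tmul, one_smul] at key
  simp only [e, LinearMap.comp_apply, Algebra.linearMap_apply, ← Algebra.smul_def,
    LinearMap.id_apply]
  exact key

lemma antipode_conv : conv (HopfAlgebra.antipode (R := k)) LinearMap.id = e (k := k) (H := H) := by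
  ext x
  rw [conv_apply _ _ x (Coalgebra.Repr.arbitrary k x)]
  simp only [LinearMap.id_apply, e, LinearMap.comp_apply, Algebra.linearMap_apply]
  exact HopfAlgebra.sum_antipode_mul_eq_algebraMap_counit (Coalgebra.Repr.arbitrary k x)

lemma conv_antipode : conv LinearMap.id (HopfAlgebra.antipode (R := k)) = e (k := k) (H := H) := by
  ext x
  rw [conv_apply _ _ x (Coalgebra.Repr.arbitrary k x)]
  simp only [LinearMap.id_apply, e, LinearMap.comp_apply, Algebra.linearMap_apply]
  exact HopfAlgebra.sum_mul_antipode_eq_algebraMap_counit (Coalgebra.Repr.arbitrary k x)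

lemma conv_assoc (f g h : H →ₗ[k] H) : conv (conv f g) h = conv f (conv g h) := by
  ext x
  let r := Coalgebra.Repr.arbitrary k x
  let a₁ : (i : H × H) → Coalgebra.Repr k (r.left i) (H × H) := fun i => Coalgebra.Repr.arbitrary k _
  let a₂ : (i : H × H) → Coalgebra.Repr k (r.right i) (H × H) := fun i => Coalgebra.Repr.arbitrary k _
  have key := Coalgebra.sum_map_tmul_tmul_eq (R := k) f g h x (repr := r) (a₁ := a₁) (a₂ := a₂)
  apply_fun (LinearMap.mul' k H ∘ₗ lTensor H (LinearMap.mul' k H)) at key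
  simp only [map_sum, LinearMap.comp_apply, lTensor_tmul, LinearMap.mul'_apply] at key
  rw [conv_apply _ _ x r, conv_apply _ _ x r]
  rw [show ∑ i ∈ r.index, conv f g (r.left i) * h (r.right i)
      = ∑ i ∈ r.index, ∑ j ∈ (a₁ i).index,
          f ((a₁ i).left j) * (g ((a₁ i).right j) * h (r.right i)) from by
    refine Finset.sum_congr rfl fun i _ => ?_
    rw [conv_apply f g _ (a₁ i), Finset.sum_mul]
    exact Finset.sum_congr rfl fun j _ => mul_assoc _ _ _]
  rw [show ∑ i ∈ r.index, f (r.left i) * conv g h (r.right i)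
      = ∑ i ∈ r.index, ∑ j ∈ (a₂ i).index,
          f (r.left i) * (g ((a₂ i).left j) * h ((a₂ i).right j)) from by
    refine Finset.sum_congr rfl fun i _ => ?_
    rw [conv_apply g h _ (a₂ i), Finset.mul_sum]]
  exact key.symm

variable (σ : H →ₐ[k] k)

def sig : H →ₗ[k] H := Algebra.linearMap k H ∘ₗ σ.toLinearMap

def phi : H →ₗ[k] H :=
  Algebra.linearMap k H ∘ₗ (σ.toLinearMap ∘ₗ HopfAlgebra.antipode (R := k))

lemma sig_conv_phi : conv (sig σ) (phi σ) = e (k := k) (H := H) := by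
  ext x
  rw [conv_apply _ _ x (Coalgebra.Repr.arbitrary k x)]
  have h := HopfAlgebra.sum_mul_antipode_eq_algebraMap_counit (R := k) (Coalgebra.Repr.arbitrary k x)
  simp only [sig, phi, LinearMap.comp_apply, Algebra.linearMap_apply, e]
  calc ∑ i ∈ (Coalgebra.Repr.arbitrary k x).index,
        algebraMap k H (σ ((Coalgebra.Repr.arbitrary k x).left i)) *
          algebraMap k H (σ (HopfAlgebra.antipode (R := k)
            ((Coalgebra.Repr.arbitrary k x).right i)))
      = algebraMap k H (σ (∑ i ∈ (Coalgebra.Repr.arbitrary k x).index,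
          (Coalgebra.Repr.arbitrary k x).left i *
            HopfAlgebra.antipode (R := k) ((Coalgebra.Repr.arbitrary k x).right i))) := by
        rw [map_sum, map_sum]
        exact Finset.sum_congr rfl fun i _ => by rw [map_mul, map_mul]
    _ = algebraMap k H (Coalgebra.counit (R := k) x) := by
        rw [h, AlgHom.commutes]
        simp

lemma phi_conv_sig : conv (phi σ) (sig σ) = e (k := k) (H := H) := by
  ext x
  rw [conv_apply _ _ x (Coalgebra.Repr.arbitrary k x)]
  have h := HopfAlgebra.sum_antipode_mul_eq_algebraMap_counit (R := k) (Coalgebra.Repr.arbitrary k x)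
  simp only [sig, phi, LinearMap.comp_apply, Algebra.linearMap_apply, e]
  calc ∑ i ∈ (Coalgebra.Repr.arbitrary k x).index,
        algebraMap k H (σ (HopfAlgebra.antipode (R := k)
            ((Coalgebra.Repr.arbitrary k x).left i))) *
          algebraMap k H (σ ((Coalgebra.Repr.arbitrary k x).right i))
      = algebraMap k H (σ (∑ i ∈ (Coalgebra.Repr.arbitrary k x).index,
          HopfAlgebra.antipode (R := k) ((Coalgebra.Repr.arbitrary k x).left i) *
            (Coalgebra.Repr.arbitrary k x).right i)) := by
        rw [map_sum, map_sum]
        exact Finset.sum_congr rfl fun i _ => by rw [map_mul, map_mul]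
    _ = algebraMap k H (Coalgebra.counit (R := k) x) := by
        rw [h, AlgHom.commutes]
        simp

lemma comp_conv (f : H →ₗ[k] k) (g : H →ₗ[k] H) :
    g ∘ₗ conv (Algebra.linearMap k H ∘ₗ f) LinearMap.id =
      conv (Algebra.linearMap k H ∘ₗ f) g := by
  ext x
  rw [LinearMap.comp_apply, conv_apply _ _ x (Coalgebra.Repr.arbitrary k x),
    conv_apply _ _ x (Coalgebra.Repr.arbitrary k x)]
  simp only [LinearMap.comp_apply, Algebra.linearMap_apply, LinearMap.id_apply,
    ← Algebra.smul_def]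
  rw [map_sum]
  exact Finset.sum_congr rfl fun i _ => by rw [map_smul]

/-- `a ⊗ b ↦ f a • b` -/
def fsmul (f : H →ₗ[k] k) : H ⊗[k] H →ₗ[k] H :=
  (TensorProduct.lid k H).toLinearMap ∘ₗ rTensor H f

@[simp] lemma fsmul_tmul (f : H →ₗ[k] k) (a b : H) : fsmul f (a ⊗ₜ[k] b) = f a • b := rfl

lemma conv_unit_apply (f : H →ₗ[k] k) (x : H) {ι : Type*} (r : Coalgebra.Repr k x ι) :
    conv (Algebra.linearMap k H ∘ₗ f) LinearMap.id x =
      ∑ i ∈ r.index, f (r.left i) • r.right i := by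
  rw [conv_apply _ _ x r]
  simp only [LinearMap.comp_apply, Algebra.linearMap_apply, LinearMap.id_apply,
    ← Algebra.smul_def]

lemma comul_conv_unit (f : H →ₗ[k] k) :
    Coalgebra.comul (R := k) ∘ₗ conv (Algebra.linearMap k H ∘ₗ f) LinearMap.id =
      rTensor H (conv (Algebra.linearMap k H ∘ₗ f) LinearMap.id) ∘ₗ
        Coalgebra.comul (R := k) := by
  ext x
  set r := Coalgebra.Repr.arbitrary k x with hr
  set a₁ : (i : H × H) → Coalgebra.Repr k (r.left i) (H × H) := fun i => Coalgebra.Repr.arbitrary k _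
  set a₂ : (i : H × H) → Coalgebra.Repr k (r.right i) (H × H) := fun i => Coalgebra.Repr.arbitrary k _
  have key := Coalgebra.sum_tmul_tmul_eq (R := k) r a₁ a₂
  apply_fun (rTensor H (fsmul f) ∘ₗ (TensorProduct.assoc k H H H).symm.toLinearMap) at key
  simp only [map_sum, LinearMap.comp_apply, LinearEquiv.coe_coe,
    TensorProduct.assoc_symm_tmul, rTensor_tmul, fsmul_tmul] at key
  -- key : ∑ i ∑ j, (f (a₁l) • a₁r) ⊗ₜ r.right i = ∑ i ∑ j, (f (r.left i) • a₂l) ⊗ₜ a₂r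
  rw [LinearMap.comp_apply, LinearMap.comp_apply, conv_unit_apply f x r]
  rw [map_sum]
  calc ∑ i ∈ r.index, Coalgebra.comul (R := k) (f (r.left i) • r.right i)
      = ∑ i ∈ r.index, ∑ j ∈ (a₂ i).index,
          (f (r.left i) • (a₂ i).left j) ⊗ₜ[k] (a₂ i).right j := by
        refine Finset.sum_congr rfl fun i _ => ?_
        rw [map_smul, ← (a₂ i).eq, Finset.smul_sum]
        exact Finset.sum_congr rfl fun j _ => by rw [TensorProduct.smul_tmul']
    _ = ∑ i ∈ r.index, ∑ j ∈ (a₁ i).index,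
          (f ((a₁ i).left j) • (a₁ i).right j) ⊗ₜ[k] r.right i := key.symm
    _ = rTensor H (conv (Algebra.linearMap k H ∘ₗ f) LinearMap.id)
          (∑ i ∈ r.index, r.left i ⊗ₜ[k] r.right i) := by
        rw [map_sum]
        refine Finset.sum_congr rfl fun i _ => ?_
        rw [rTensor_tmul, conv_unit_apply f _ (a₁ i), TensorProduct.sum_tmul]
    _ = rTensor H (conv (Algebra.linearMap k H ∘ₗ f) LinearMap.id)
          (Coalgebra.comul (R := k) x) := by rw [r.eq]

@[simp] lemma sigmaSmulCM_tmul (a b : H) : sigmaSmul σ (a ⊗ₜ[k] b) = σ a • b := by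
  simp [sigmaSmul]

def Rmap : H →ₗ[k] H := conv (phi σ) LinearMap.id

lemma core_R : (sigmaSmul σ ∘ₗ rTensor H (HopfAlgebra.antipode (R := k))) ∘ₗ
    Coalgebra.comul (R := k) = Rmap σ := by
  ext x
  rw [LinearMap.comp_apply, LinearMap.comp_apply, Rmap,
    show phi σ = Algebra.linearMap k H ∘ₗ (σ.toLinearMap ∘ₗ HopfAlgebra.antipode (R := k))
      from rfl,
    conv_unit_apply _ x (Coalgebra.Repr.arbitrary k x), ← (Coalgebra.Repr.arbitrary k x).eq]
  simp [map_sum]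

lemma twistedComul_eq :
    twistedComul σ = lTensor H (Rmap σ) ∘ₗ Coalgebra.comul (R := k) := by
  rw [twistedComul, ← LinearMap.comp_assoc, ← lTensor_comp, core_R]

lemma twistedAntipode_eq :
    twistedAntipode σ = conv (sig σ) (conv (HopfAlgebra.antipode (R := k)) (sig σ)) := by
  ext x
  set r := Coalgebra.Repr.arbitrary k x with hr
  rw [twistedAntipode, LinearMap.comp_apply, LinearMap.comp_apply, LinearMap.comp_apply,
    conv_apply _ _ x r, ← r.eq]
  rw [map_sum, map_sum, map_sum]
  refine Finset.sum_congr rfl fun i _ => ?_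
  rw [lTensor_tmul, lTensor_tmul, conv_apply _ _ _ (Coalgebra.Repr.arbitrary k (r.right i)),
    ← (Coalgebra.Repr.arbitrary k (r.right i)).eq]
  simp only [map_sum, rTensor_tmul, LinearMap.comp_apply, LinearEquiv.coe_coe,
    TensorProduct.comm_tmul, sigmaSmulCM_tmul, TensorProduct.tmul_sum, sig,
    Algebra.linearMap_apply]
  rw [Finset.mul_sum]
  refine Finset.sum_congr rfl fun j _ => ?_
  rw [show (σ.toLinearMap : H → k) = σ from rfl, ← Algebra.commutes
    (σ ((Coalgebra.Repr.arbitrary k (r.right i)).right j)), ← Algebra.smul_def,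
    ← Algebra.smul_def]

lemma comul_comp_Rmap :
    Coalgebra.comul (R := k) ∘ₗ Rmap σ = rTensor H (Rmap σ) ∘ₗ Coalgebra.comul (R := k) :=
  comul_conv_unit (σ.toLinearMap ∘ₗ HopfAlgebra.antipode (R := k))

lemma comp_Rmap (g : H →ₗ[k] H) : g ∘ₗ Rmap σ = conv (phi σ) g :=
  comp_conv (σ.toLinearMap ∘ₗ HopfAlgebra.antipode (R := k)) g

lemma conv_form (f g : H →ₗ[k] H) :
    LinearMap.mul' k H ∘ₗ rTensor H f ∘ₗ lTensor H g ∘ₗ Coalgebra.comul (R := k) =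
      conv f g := by
  rw [conv, ← rTensor_comp_lTensor]
  simp only [LinearMap.comp_assoc]

lemma conv_form_l (f g : H →ₗ[k] H) :
    LinearMap.mul' k H ∘ₗ lTensor H f ∘ₗ lTensor H g ∘ₗ Coalgebra.comul (R := k) =
      conv LinearMap.id (f ∘ₗ g) := by
  rw [conv, show TensorProduct.map LinearMap.id (f ∘ₗ g) = lTensor H (f ∘ₗ g) from rfl,
    lTensor_comp]
  simp only [LinearMap.comp_assoc]

lemma coassoc_twisted :
    (TensorProduct.assoc k H H H).toLinearMap ∘ₗ
        LinearMap.rTensor H (twistedComul σ) ∘ₗ twistedComul σ =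
      LinearMap.lTensor H (twistedComul σ) ∘ₗ twistedComul σ := by
  rw [twistedComul_eq]
  set R := Rmap σ with hR
  set Δ := Coalgebra.comul (R := k) (A := H) with hΔ
  have swap : rTensor H Δ ∘ₗ lTensor H R = lTensor (H ⊗[k] H) R ∘ₗ rTensor H Δ := by
    rw [rTensor_comp_lTensor, lTensor_comp_rTensor]
  have key : lTensor H R ∘ₗ Δ ∘ₗ R = TensorProduct.map R R ∘ₗ Δ := by
    rw [comul_comp_Rmap, ← LinearMap.comp_assoc, lTensor_comp_rTensor]
  have nat : TensorProduct.map (lTensor H R) R ∘ₗ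
      (TensorProduct.assoc k H H H).symm.toLinearMap =
      (TensorProduct.assoc k H H H).symm.toLinearMap ∘ₗ
        lTensor H (TensorProduct.map R R) :=
    TensorProduct.map_map_comp_assoc_symm_eq LinearMap.id R R
  have hassoc : (TensorProduct.assoc k H H H).toLinearMap ∘ₗ
      (TensorProduct.assoc k H H H).symm.toLinearMap = LinearMap.id :=
    by ext x; simp
  calc (TensorProduct.assoc k H H H).toLinearMap ∘ₗ
        rTensor H (lTensor H R ∘ₗ Δ) ∘ₗ lTensor H R ∘ₗ Δ
      = (TensorProduct.assoc k H H H).toLinearMap ∘ₗ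
          rTensor H (lTensor H R) ∘ₗ (rTensor H Δ ∘ₗ lTensor H R) ∘ₗ Δ := by
        rw [rTensor_comp]
        simp only [LinearMap.comp_assoc]
    _ = (TensorProduct.assoc k H H H).toLinearMap ∘ₗ
          (rTensor H (lTensor H R) ∘ₗ lTensor (H ⊗[k] H) R) ∘ₗ rTensor H Δ ∘ₗ Δ := by
        rw [swap]
        simp only [LinearMap.comp_assoc]
    _ = (TensorProduct.assoc k H H H).toLinearMap ∘ₗ
          TensorProduct.map (lTensor H R) R ∘ₗ rTensor H Δ ∘ₗ Δ := by
        rw [rTensor_comp_lTensor]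
    _ = (TensorProduct.assoc k H H H).toLinearMap ∘ₗ
          (TensorProduct.map (lTensor H R) R ∘ₗ
            (TensorProduct.assoc k H H H).symm.toLinearMap) ∘ₗ lTensor H Δ ∘ₗ Δ := by
        rw [show rTensor H Δ ∘ₗ Δ = (TensorProduct.assoc k H H H).symm.toLinearMap ∘ₗ
          lTensor H Δ ∘ₗ Δ from (Coalgebra.coassoc_symm (R := k) (A := H)).symm]
        simp only [LinearMap.comp_assoc]
    _ = (TensorProduct.assoc k H H H).toLinearMap ∘ₗ
          (TensorProduct.assoc k H H H).symm.toLinearMap ∘ₗ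
            lTensor H (TensorProduct.map R R) ∘ₗ lTensor H Δ ∘ₗ Δ := by
        rw [nat]
        simp only [LinearMap.comp_assoc]
    _ = lTensor H (TensorProduct.map R R) ∘ₗ lTensor H Δ ∘ₗ Δ := by
        rw [← LinearMap.comp_assoc, hassoc, LinearMap.id_comp]
    _ = lTensor H (TensorProduct.map R R ∘ₗ Δ) ∘ₗ Δ := by
        rw [lTensor_comp]
        simp only [LinearMap.comp_assoc]
    _ = lTensor H (lTensor H R ∘ₗ Δ) ∘ₗ lTensor H R ∘ₗ Δ := by
        rw [← key, show lTensor H R ∘ₗ Δ ∘ₗ R = (lTensor H R ∘ₗ Δ) ∘ₗ R from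
          (LinearMap.comp_assoc _ _ _).symm, lTensor_comp]
        simp only [LinearMap.comp_assoc]

/-- Representation of `comul (x * y)` from representations of `x` and `y`. -/
def mulRepr (x y : H) {ι κ : Type*} (r : Coalgebra.Repr k x ι) (s : Coalgebra.Repr k y κ) :
    Coalgebra.Repr k (x * y) (ι × κ) where
  index := r.index ×ˢ s.index
  left := fun p => r.left p.1 * s.left p.2
  right := fun p => r.right p.1 * s.right p.2
  eq := by
    rw [Bialgebra.comul_mul, ← r.eq, ← s.eq, Finset.sum_mul_sum]
    rw [Finset.sum_product]
    exact Finset.sum_congr rfl fun i _ => Finset.sum_congr rfl fun j _ =>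
      (Algebra.TensorProduct.tmul_mul_tmul _ _ _ _).symm

/-- Representation of `comul 1`. -/
def oneRepr : Coalgebra.Repr k (1 : H) Unit where
  index := {()}
  left := fun _ => 1
  right := fun _ => 1
  eq := by
    simp [Algebra.TensorProduct.one_def]

def umap : H →ₗ[k] H := conv (sig σ) LinearMap.id

lemma umap_apply (x : H) {ι : Type*} (r : Coalgebra.Repr k x ι) :
    umap σ x = ∑ i ∈ r.index, σ (r.left i) • r.right i :=
  conv_unit_apply σ.toLinearMap x r

lemma u_mul (x y : H) : umap σ (x * y) = umap σ x * umap σ y := by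
  rw [umap_apply σ x (Coalgebra.Repr.arbitrary k x),
    umap_apply σ y (Coalgebra.Repr.arbitrary k y),
    umap_apply σ (x * y) (mulRepr x y (Coalgebra.Repr.arbitrary k x)
      (Coalgebra.Repr.arbitrary k y)),
    Finset.sum_mul_sum]
  have hprod : ∑ i ∈ (mulRepr x y (Coalgebra.Repr.arbitrary k x)
        (Coalgebra.Repr.arbitrary k y)).index,
      σ ((mulRepr x y (Coalgebra.Repr.arbitrary k x) (Coalgebra.Repr.arbitrary k y)).left i) •
        (mulRepr x y (Coalgebra.Repr.arbitrary k x) (Coalgebra.Repr.arbitrary k y)).right i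
      = ∑ i ∈ (Coalgebra.Repr.arbitrary k x).index, ∑ j ∈ (Coalgebra.Repr.arbitrary k y).index,
          σ ((Coalgebra.Repr.arbitrary k x).left i * (Coalgebra.Repr.arbitrary k y).left j) •
            ((Coalgebra.Repr.arbitrary k x).right i * (Coalgebra.Repr.arbitrary k y).right j) :=
    Finset.sum_product _ _ _
  rw [hprod]
  refine Finset.sum_congr rfl fun i _ => Finset.sum_congr rfl fun j _ => ?_
  rw [map_mul, smul_mul_smul_comm]

lemma u_one : umap σ (1 : H) = 1 := by
  rw [umap_apply σ 1 (oneRepr (k := k) (H := H))]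
  simp [oneRepr]

lemma u_comp_R : umap σ ∘ₗ Rmap σ = LinearMap.id := by
  rw [comp_Rmap, umap, ← conv_assoc, phi_conv_sig, e_conv]

lemma R_comp_u : Rmap σ ∘ₗ umap σ = LinearMap.id := by
  have : Rmap σ ∘ₗ umap σ = conv (sig σ) (Rmap σ) := by
    rw [umap]
    exact comp_conv σ.toLinearMap (Rmap σ)
  rw [this, Rmap, ← conv_assoc, sig_conv_phi, e_conv]

lemma R_mul (x y : H) : Rmap σ (x * y) = Rmap σ x * Rmap σ y := by
  have h1 : ∀ z, umap σ (Rmap σ z) = z := fun z => LinearMap.congr_fun (u_comp_R σ) z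
  have h2 : ∀ z, Rmap σ (umap σ z) = z := fun z => LinearMap.congr_fun (R_comp_u σ) z
  calc Rmap σ (x * y) = Rmap σ (umap σ (Rmap σ x) * umap σ (Rmap σ y)) := by rw [h1, h1]
    _ = Rmap σ (umap σ (Rmap σ x * Rmap σ y)) := by rw [u_mul]
    _ = Rmap σ x * Rmap σ y := h2 _

lemma R_one : Rmap σ (1 : H) = 1 := by
  have h2 : ∀ z, Rmap σ (umap σ z) = z := fun z => LinearMap.congr_fun (R_comp_u σ) z
  conv_lhs => rw [← u_one σ]
  rw [h2]

lemma twistedComul_mul (a b : H) :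
    twistedComul σ (a * b) = twistedComul σ a * twistedComul σ b := by
  rw [twistedComul_eq]
  simp only [LinearMap.comp_apply, Bialgebra.comul_mul]
  generalize Coalgebra.comul (R := k) a = u
  generalize Coalgebra.comul (R := k) b = v
  induction u with
  | zero => simp
  | tmul x y =>
    induction v with
    | zero => simp
    | tmul z w =>
      simp only [Algebra.TensorProduct.tmul_mul_tmul, lTensor_tmul, R_mul]
    | add v₁ v₂ h1 h2 => simp only [mul_add, map_add, h1, h2]
  | add u₁ u₂ h1 h2 => simp only [add_mul, map_add, h1, h2]

lemma twistedComul_one : twistedComul σ (1 : H) = 1 := by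
  rw [twistedComul_eq]
  simp only [LinearMap.comp_apply, Bialgebra.comul_one, Algebra.TensorProduct.one_def,
    lTensor_tmul, R_one]

lemma c11 : (TensorProduct.lid k H).toLinearMap ∘ₗ rTensor H σ.toLinearMap =
    LinearMap.mul' k H ∘ₗ rTensor H (sig σ) := by
  apply TensorProduct.ext'
  intro a b
  simp [sig, Algebra.smul_def]

lemma c12 : (TensorProduct.rid k H).toLinearMap ∘ₗ lTensor H σ.toLinearMap =
    LinearMap.mul' k H ∘ₗ lTensor H (sig σ) := by
  apply TensorProduct.ext'
  intro a b
  simp only [LinearMap.comp_apply, lTensor_tmul, LinearEquiv.coe_coe,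
    TensorProduct.rid_tmul, LinearMap.mul'_apply, sig, Algebra.linearMap_apply,
    AlgHom.toLinearMap_apply]
  rw [← Algebra.commutes, ← Algebra.smul_def]

lemma counit_left : (TensorProduct.lid k H).toLinearMap ∘ₗ
    LinearMap.rTensor H σ.toLinearMap ∘ₗ twistedComul σ = LinearMap.id := by
  rw [twistedComul_eq, ← LinearMap.comp_assoc, c11]
  simp only [LinearMap.comp_assoc]
  rw [conv_form, show Rmap σ = conv (phi σ) LinearMap.id from rfl,
    ← conv_assoc, sig_conv_phi, e_conv]

lemma counit_right : (TensorProduct.rid k H).toLinearMap ∘ₗ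
    LinearMap.lTensor H σ.toLinearMap ∘ₗ twistedComul σ = LinearMap.id := by
  rw [twistedComul_eq, ← LinearMap.comp_assoc, c12]
  simp only [LinearMap.comp_assoc]
  rw [conv_form_l, comp_Rmap σ (sig σ), phi_conv_sig, conv_e]

lemma antipode_left : LinearMap.mul' k H ∘ₗ LinearMap.rTensor H (twistedAntipode σ) ∘ₗ
    twistedComul σ = (Algebra.linearMap k H) ∘ₗ σ.toLinearMap := by
  rw [twistedAntipode_eq, twistedComul_eq, conv_form,
    show Rmap σ = conv (phi σ) LinearMap.id from rfl,
    conv_assoc (sig σ) (conv (HopfAlgebra.antipode (R := k)) (sig σ))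
      (conv (phi σ) LinearMap.id),
    conv_assoc (HopfAlgebra.antipode (R := k)) (sig σ) (conv (phi σ) LinearMap.id),
    ← conv_assoc (sig σ) (phi σ) LinearMap.id, sig_conv_phi, e_conv, antipode_conv, conv_e]
  rfl

lemma antipode_right : LinearMap.mul' k H ∘ₗ LinearMap.lTensor H (twistedAntipode σ) ∘ₗ
    twistedComul σ = (Algebra.linearMap k H) ∘ₗ σ.toLinearMap := by
  rw [twistedComul_eq, conv_form_l, comp_Rmap σ (twistedAntipode σ), twistedAntipode_eq,
    ← conv_assoc (phi σ) (sig σ) (conv (HopfAlgebra.antipode (R := k)) (sig σ)),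
    phi_conv_sig, e_conv,
    ← conv_assoc LinearMap.id (HopfAlgebra.antipode (R := k)) (sig σ),
    conv_antipode, e_conv]
  rfl

end CMTwist

/-- Connes–Moscovici twisting: for a Hopf algebra `H` over a commutative ring `k` with
antipode `S` and a character `σ : H → k`, the data `(H, m, 1, Δ₂, ε₂ = σ, S₂)` with
`Δ₂(h) = h₍₁₎ ⊗ σ(S(h₍₂₎)) h₍₃₎` and `S₂(h) = σ(h₍₁₎) S(h₍₂₎) σ(h₍₃₎)` is a Hopf algebra:
`Δ₂` is a coassociative algebra morphism, counital with respect to `ε₂ = σ` (which is an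
algebra morphism), and `S₂` satisfies the antipode axioms. -/
theorem stmt3 (σ : H →ₐ[k] k) :
    -- Δ₂ is coassociative
    ((TensorProduct.assoc k H H H).toLinearMap ∘ₗ
        LinearMap.rTensor H (twistedComul σ) ∘ₗ twistedComul σ =
      LinearMap.lTensor H (twistedComul σ) ∘ₗ twistedComul σ) ∧
    -- ε₂ = σ is a counit for Δ₂
    ((TensorProduct.lid k H).toLinearMap ∘ₗ
        LinearMap.rTensor H σ.toLinearMap ∘ₗ twistedComul σ = LinearMap.id) ∧
    ((TensorProduct.rid k H).toLinearMap ∘ₗ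
        LinearMap.lTensor H σ.toLinearMap ∘ₗ twistedComul σ = LinearMap.id) ∧
    -- Δ₂ is an algebra map
    (∀ a b : H, twistedComul σ (a * b) = twistedComul σ a * twistedComul σ b) ∧
    (twistedComul σ (1 : H) = 1) ∧
    -- S₂ satisfies the antipode axioms for (Δ₂, ε₂)
    (LinearMap.mul' k H ∘ₗ LinearMap.rTensor H (twistedAntipode σ) ∘ₗ twistedComul σ =
      (Algebra.linearMap k H) ∘ₗ σ.toLinearMap) ∧
    (LinearMap.mul' k H ∘ₗ LinearMap.lTensor H (twistedAntipode σ) ∘ₗ twistedComul σ =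
      (Algebra.linearMap k H) ∘ₗ σ.toLinearMap) :=
  ⟨CMTwist.coassoc_twisted σ, CMTwist.counit_left σ, CMTwist.counit_right σ,
    CMTwist.twistedComul_mul σ, CMTwist.twistedComul_one σ,
    CMTwist.antipode_left σ, CMTwist.antipode_right σ⟩

end
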